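/- Let f(x, y, z) = x³ − x z² + y² z. Then: (i) for every (x, y, z) ∈ ℂ³ ∖ {(0,0,0)} with f(x, y, z) = 0, the complex gradient (3x² − z², 2yz, −2xz + y²) is nonzero; and (ii) the set {v ∈ ℝ³ : ‖v‖ = 1 and f(v) = 0} has exactly three connected components. -/

import Mathlib

noncomputable section

def pt (a b c : ℝ) : EuclideanSpace ℝ (Fin 3) := WithLp.toLp 2 ![a, b, c]

@[simp] lemma pt0 (a b c : ℝ) : pt a b c 0 = a := rfl
@[simp] lemma pt1 (a b c : ℝ) : pt a b c 1 = b := rfl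
@[simp] lemma pt2 (a b c : ℝ) : pt a b c 2 = c := rfl

lemma pt_eta (v : EuclideanSpace ℝ (Fin 3)) : v = pt (v 0) (v 1) (v 2) := by
  ext i; fin_cases i <;> rfl

@[simp] lemma neg_pt (a b c : ℝ) : -pt a b c = pt (-a) (-b) (-c) := by
  ext i; fin_cases i <;> rfl

lemma norm_pt (a b c : ℝ) (h : a^2 + b^2 + c^2 = 1) : ‖pt a b c‖ = 1 := by
  rw [EuclideanSpace.norm_eq]
  simp only [Fin.sum_univ_three, Real.norm_eq_abs, sq_abs]
  simp only [pt0, pt1, pt2]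
  rw [h]; exact Real.sqrt_one

lemma norm_sq (v : EuclideanSpace ℝ (Fin 3)) (h : ‖v‖ = 1) :
    (v 0)^2 + (v 1)^2 + (v 2)^2 = 1 := by
  have := EuclideanSpace.norm_eq v
  rw [h] at this
  have h2 := congrArg (· ^ 2) this.symm
  simp only [Fin.sum_univ_three, Real.norm_eq_abs, sq_abs] at h2
  rw [Real.sq_sqrt (by positivity)] at h2
  linarith [h2]

/-- the oval parametrization -/
def nO (u : ℝ) : ℝ := (Real.sqrt (1 + u + u^2 - u^3))⁻¹
def φ (t s u : ℝ) : EuclideanSpace ℝ (Fin 3) :=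
  pt (t * u * nO u) (s * Real.sqrt (u - u^3) * nO u) (t * nO u)

/-- the pseudo-line parametrization -/
def dP (u : ℝ) : ℝ := (Real.sqrt (1 + u - u^2 + u^3))⁻¹
def ψ (t s u : ℝ) : EuclideanSpace ℝ (Fin 3) :=
  pt (-(t * Real.sqrt u * dP u)) (s * Real.sqrt (1 - u^2) * dP u)
     (t * u * Real.sqrt u * dP u)

lemma nO_pos {u : ℝ} (h0 : 0 ≤ u) (h1 : u ≤ 1) : 0 < nO u := by
  have : (0:ℝ) < 1 + u + u^2 - u^3 := by nlinarith
  exact inv_pos.mpr (Real.sqrt_pos.mpr this)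

lemma dP_pos {u : ℝ} (h0 : 0 ≤ u) (h1 : u ≤ 1) : 0 < dP u := by
  have : (0:ℝ) < 1 + u - u^2 + u^3 := by nlinarith
  exact inv_pos.mpr (Real.sqrt_pos.mpr this)

lemma nO_sq {u : ℝ} (h0 : 0 ≤ u) (h1 : u ≤ 1) :
    nO u ^ 2 * (1 + u + u^2 - u^3) = 1 := by
  have hQ : (0:ℝ) < 1 + u + u^2 - u^3 := by nlinarith
  rw [nO, inv_pow, Real.sq_sqrt hQ.le, inv_mul_cancel₀ hQ.ne']

lemma dP_sq {u : ℝ} (h0 : 0 ≤ u) (h1 : u ≤ 1) :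
    dP u ^ 2 * (1 + u - u^2 + u^3) = 1 := by
  have hQ : (0:ℝ) < 1 + u - u^2 + u^3 := by nlinarith
  rw [dP, inv_pow, Real.sq_sqrt hQ.le, inv_mul_cancel₀ hQ.ne']

lemma φ_mem {t s u : ℝ} (ht : t^2 = 1) (hs : s^2 = 1) (h0 : 0 ≤ u) (h1 : u ≤ 1) :
    ‖φ t s u‖ = 1 ∧
      (φ t s u 0)^3 - φ t s u 0 * (φ t s u 2)^2 + (φ t s u 1)^2 * φ t s u 2 = 0 := by
  have hu3 : 0 ≤ u - u^3 := by nlinarith [mul_nonneg h0 (mul_nonneg (sub_nonneg.mpr h1) (by linarith : (0:ℝ) ≤ 1 + u))]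
  have hr : Real.sqrt (u - u^3) ^ 2 = u - u^3 := Real.sq_sqrt hu3
  have hn := nO_sq h0 h1
  constructor
  · refine norm_pt _ _ _ ?_
    linear_combination hn + s^2*(nO u)^2*hr + (u - u^3)*(nO u)^2*hs +
      (u^2*(nO u)^2 + (nO u)^2)*ht
  · simp only [φ, pt0, pt1, pt2]
    linear_combination (s^2*t*(nO u)^3)*hr + (t*(nO u)^3*(u - u^3))*hs +
      (-(t*(nO u)^3*(u - u^3)))*ht

lemma ψ_mem {t s u : ℝ} (ht : t^2 = 1) (hs : s^2 = 1) (h0 : 0 ≤ u) (h1 : u ≤ 1) :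
    ‖ψ t s u‖ = 1 ∧
      (ψ t s u 0)^3 - ψ t s u 0 * (ψ t s u 2)^2 + (ψ t s u 1)^2 * ψ t s u 2 = 0 := by
  have hR : Real.sqrt u ^ 2 = u := Real.sq_sqrt h0
  have hQ : Real.sqrt (1 - u^2) ^ 2 = 1 - u^2 := Real.sq_sqrt (by nlinarith)
  have hd := dP_sq h0 h1
  constructor
  · refine norm_pt _ _ _ ?_
    linear_combination hd + (t^2*(dP u)^2 + t^2*u^2*(dP u)^2)*hR + s^2*(dP u)^2*hQ +
      (1-u^2)*(dP u)^2*hs + (u*(dP u)^2 + u^3*(dP u)^2)*ht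
  · simp only [ψ, pt0, pt1, pt2]
    linear_combination (-t^3*(Real.sqrt u)*(dP u)^3 + t^3*u^2*(Real.sqrt u)*(dP u)^3)*hR +
      (s^2*t*u*(Real.sqrt u)*(dP u)^3)*hQ + (t*u*(Real.sqrt u)*(dP u)^3*(1-u^2))*hs +
      (-(t*u*(Real.sqrt u)*(dP u)^3*(1-u^2)))*ht

lemma eq_of_sq_eq {a b : ℝ} (ha : 0 ≤ a) (hb : 0 ≤ b) (h : a^2 = b^2) : a = b := by
  rw [← Real.sqrt_sq ha, h, Real.sqrt_sq hb]

lemma y_small {x y z : ℝ} (h : x^2 + y^2 + z^2 = 1)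
    (hf : x^3 - x*z^2 + y^2*z = 0) (hx : 0 ≤ x) (hz : 0 < z) : y^2 ≤ 1/2 := by
  have h1 : 0 ≤ z*(x^2 - x*z + z^2) :=
    mul_nonneg hz.le (by nlinarith [sq_nonneg (x - z)])
  have h2 : (0:ℝ) ≤ x^3 := pow_nonneg hx 3
  nlinarith [mul_pos hz hz]

lemma φ_surj {v : EuclideanSpace ℝ (Fin 3)} (h1 : ‖v‖ = 1)
    (hf : (v 0)^3 - v 0 * (v 2)^2 + (v 1)^2 * v 2 = 0)
    (hx : 0 ≤ v 0) (hz : 0 < v 2) :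
    ∃ s u, (s = 1 ∨ s = -1) ∧ 0 ≤ u ∧ u ≤ 1 ∧ φ 1 s u = v := by
  have hns := norm_sq v h1
  set x := v 0 with hxdef; set y := v 1 with hydef; set z := v 2 with hzdef
  set u := x / z with hu
  have hzne : z ≠ 0 := hz.ne'
  have hxu : x = u * z := by rw [hu, div_mul_cancel₀ x hzne]
  have hu0 : 0 ≤ u := div_nonneg hx hz.le
  have hu1 : u ≤ 1 := by
    rcases eq_or_lt_of_le hx with h | h
    · simp [hu, ← h]
    · have hxz : x ≤ z := by
        nlinarith [mul_nonneg (sq_nonneg y) hz.le,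
          mul_pos (mul_pos h hz) (show (0:ℝ) < x + z by linarith)]
      exact (div_le_one hz).mpr hxz
  have hQ : (0:ℝ) < 1 + u + u^2 - u^3 := by nlinarith
  have h3 : y^2 * z = ((u - u^3) * z^2) * z := by
    linear_combination hf + (z^2 - x^2 - x*u*z - u^2*z^2) * hxu
  have hy2 : y^2 = (u - u^3) * z^2 := mul_right_cancel₀ hzne h3
  have hz2 : z^2 * (1 + u + u^2 - u^3) = 1 := by
    linear_combination hns - hy2 - (x + u*z) * hxu
  have hzeq : z = nO u := by
    refine eq_of_sq_eq hz.le (nO_pos hu0 hu1).le ?_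
    exact mul_right_cancel₀ hQ.ne' (by linarith [nO_sq hu0 hu1])
  have hxeq : x = u * nO u := by rw [hxu, hzeq]
  have hru : Real.sqrt (u - u^3) ^ 2 = u - u^3 :=
    Real.sq_sqrt (by nlinarith [mul_nonneg hu0 (mul_nonneg (sub_nonneg.mpr hu1)
      (by linarith : (0:ℝ) ≤ 1 + u))])
  have hy2' : y^2 = (Real.sqrt (u - u^3) * nO u)^2 := by
    rw [mul_pow, hru, ← hzeq]; exact hy2
  have hsr : 0 ≤ Real.sqrt (u - u^3) * nO u :=
    mul_nonneg (Real.sqrt_nonneg _) (nO_pos hu0 hu1).le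
  rcases le_or_gt 0 y with hy | hy
  · have hyeq : y = Real.sqrt (u - u^3) * nO u := eq_of_sq_eq hy hsr hy2'
    refine ⟨1, u, Or.inl rfl, hu0, hu1, ?_⟩
    conv_rhs => rw [pt_eta v]
    simp only [φ]
    rw [show (1:ℝ) * u * nO u = x by linear_combination -hxeq,
        show (1:ℝ) * Real.sqrt (u - u^3) * nO u = y by linear_combination -hyeq,
        show (1:ℝ) * nO u = z by linear_combination -hzeq]
  · have hyeq : -y = Real.sqrt (u - u^3) * nO u :=
      eq_of_sq_eq (by linarith) hsr (by linear_combination hy2')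
    refine ⟨-1, u, Or.inr rfl, hu0, hu1, ?_⟩
    conv_rhs => rw [pt_eta v]
    simp only [φ]
    rw [show (-1:ℝ) * Real.sqrt (u - u^3) * nO u = y by linear_combination hyeq,
        show (1:ℝ) * u * nO u = x by linear_combination -hxeq,
        show (1:ℝ) * nO u = z by linear_combination -hzeq]

lemma ψ_surj {v : EuclideanSpace ℝ (Fin 3)} (h1 : ‖v‖ = 1)
    (hf : (v 0)^3 - v 0 * (v 2)^2 + (v 1)^2 * v 2 = 0)
    (hx : v 0 < 0) (hz : 0 < v 2) :
    ∃ s u, (s = 1 ∨ s = -1) ∧ 0 ≤ u ∧ u ≤ 1 ∧ ψ 1 s u = v := by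
  have hns := norm_sq v h1
  set x := v 0 with hxdef; set y := v 1 with hydef; set z := v 2 with hzdef
  obtain ⟨u, hu⟩ : ∃ u : ℝ, u = -z / x := ⟨_, rfl⟩
  have hxne : x ≠ 0 := hx.ne
  have hxu : u * x = -z := by rw [hu]; field_simp
  have hu0 : 0 < u := by
    rw [hu, div_pos_iff]; right; constructor <;> linarith
  have hzx : z + x ≤ 0 := by
    by_contra hc
    push_neg at hc
    nlinarith [mul_nonneg (sq_nonneg y) hz.le,
      mul_pos (mul_pos (neg_pos.mpr hx) (show (0:ℝ) < z - x by linarith)) hc]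
  have hu1 : u ≤ 1 := by
    rw [hu, div_le_one_iff]
    right; right; exact ⟨hx, by linarith⟩
  have hD : (0:ℝ) < 1 + u - u^2 + u^3 := by nlinarith
  have hune : u ≠ 0 := hu0.ne'
  have hy3 : (y^2 * u^3) * z = ((1 - u^2) * z^2) * z := by
    linear_combination u^3 * hf + ((u^2-1)*z^2 + u*x*z - u^2*x^2) * hxu
  have hy2 : y^2 * u^3 = (1 - u^2) * z^2 := mul_right_cancel₀ hz.ne' hy3
  have hz2 : z^2 * (1 + u - u^2 + u^3) = u^3 := by
    linear_combination u^3 * hns - hy2 + (u*(z - u*x)) * hxu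
  have hR : Real.sqrt u ^ 2 = u := Real.sq_sqrt hu0.le
  have hd := dP_sq hu0.le hu1
  have hzsq : (u * Real.sqrt u * dP u)^2 * (1 + u - u^2 + u^3)
      = z^2 * (1 + u - u^2 + u^3) := by
    linear_combination (u^2*(dP u)^2*(1+u-u^2+u^3))*hR + u^3*hd - hz2
  have hzeq : z = u * Real.sqrt u * dP u := by
    refine eq_of_sq_eq hz.le ?_ ?_
    · exact mul_nonneg (mul_nonneg hu0.le (Real.sqrt_nonneg _)) (dP_pos hu0.le hu1).le
    · exact (mul_right_cancel₀ hD.ne' hzsq).symm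
  have hxeq : x = -(Real.sqrt u * dP u) := by
    refine mul_left_cancel₀ hune ?_
    rw [hxu, hzeq]; ring
  have hQs : Real.sqrt (1 - u^2) ^ 2 = 1 - u^2 := Real.sq_sqrt (by nlinarith)
  have hy2' : (y^2 * u^3) * (1 + u - u^2 + u^3)
      = ((Real.sqrt (1 - u^2) * dP u)^2 * u^3) * (1 + u - u^2 + u^3) := by
    linear_combination (1+u-u^2+u^3)*hy2 + (1-u^2)*hz2 -
      ((dP u)^2*u^3*(1+u-u^2+u^3))*hQs - ((1-u^2)*u^3)*hd
  have hy2'' : y^2 = (Real.sqrt (1 - u^2) * dP u)^2 :=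
    mul_right_cancel₀ (pow_ne_zero 3 hune) (mul_right_cancel₀ hD.ne' hy2')
  have hsr : 0 ≤ Real.sqrt (1 - u^2) * dP u :=
    mul_nonneg (Real.sqrt_nonneg _) (dP_pos hu0.le hu1).le
  rcases le_or_gt 0 y with hy | hy
  · have hyeq : y = Real.sqrt (1 - u^2) * dP u := eq_of_sq_eq hy hsr hy2''
    refine ⟨1, u, Or.inl rfl, hu0.le, hu1, ?_⟩
    conv_rhs => rw [pt_eta v]
    simp only [ψ]
    rw [show -((1:ℝ) * Real.sqrt u * dP u) = x by linear_combination -hxeq,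
        show (1:ℝ) * Real.sqrt (1 - u^2) * dP u = y by linear_combination -hyeq,
        show (1:ℝ) * u * Real.sqrt u * dP u = z by linear_combination -hzeq]
  · have hyeq : -y = Real.sqrt (1 - u^2) * dP u :=
      eq_of_sq_eq (by linarith) hsr (by linear_combination hy2'')
    refine ⟨-1, u, Or.inr rfl, hu0.le, hu1, ?_⟩
    conv_rhs => rw [pt_eta v]
    simp only [ψ]
    rw [show -((1:ℝ) * Real.sqrt u * dP u) = x by linear_combination -hxeq,
        show (-1:ℝ) * Real.sqrt (1 - u^2) * dP u = y by linear_combination hyeq,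
        show (1:ℝ) * u * Real.sqrt u * dP u = z by linear_combination -hzeq]

lemma coord_continuous (i : Fin 3) : Continuous (fun v : EuclideanSpace ℝ (Fin 3) => v i) :=
  (continuous_apply i).comp (PiLp.continuous_ofLp 2 (fun _ : Fin 3 => ℝ))

lemma continuousOn_pt_comp {a b c : ℝ → ℝ} {s : Set ℝ} (ha : ContinuousOn a s)
    (hb : ContinuousOn b s) (hc : ContinuousOn c s) :
    ContinuousOn (fun u => pt (a u) (b u) (c u)) s := by
  have h : ContinuousOn (fun u => (![a u, b u, c u] : Fin 3 → ℝ)) s := by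
    refine continuousOn_pi.mpr fun i => ?_
    fin_cases i
    · simpa using ha
    · simpa using hb
    · simpa using hc
  exact (PiLp.continuous_toLp 2 (fun _ : Fin 3 => ℝ)).comp_continuousOn h

lemma contOn_nO : ContinuousOn nO (Set.Icc (0:ℝ) 1) := by
  refine ContinuousOn.inv₀ ((Real.continuous_sqrt.comp (by continuity)).continuousOn) ?_
  rintro u ⟨h0, h1⟩
  exact (Real.sqrt_pos.mpr (by nlinarith)).ne'

lemma contOn_dP : ContinuousOn dP (Set.Icc (0:ℝ) 1) := by
  refine ContinuousOn.inv₀ ((Real.continuous_sqrt.comp (by continuity)).continuousOn) ?_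
  rintro u ⟨h0, h1⟩
  exact (Real.sqrt_pos.mpr (by nlinarith)).ne'

lemma contOn_φ (t s : ℝ) : ContinuousOn (φ t s) (Set.Icc (0:ℝ) 1) := by
  refine continuousOn_pt_comp ?_ ?_ ?_
  · exact (continuousOn_const.mul continuousOn_id).mul contOn_nO
  · exact (continuousOn_const.mul
      ((Real.continuous_sqrt.comp (by continuity)).continuousOn)).mul contOn_nO
  · exact continuousOn_const.mul contOn_nO

lemma contOn_ψ (t s : ℝ) : ContinuousOn (ψ t s) (Set.Icc (0:ℝ) 1) := by
  refine continuousOn_pt_comp ?_ ?_ ?_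
  · exact ((continuousOn_const.mul Real.continuous_sqrt.continuousOn).mul contOn_dP).neg
  · exact (continuousOn_const.mul
      ((Real.continuous_sqrt.comp (by continuity)).continuousOn)).mul contOn_dP
  · exact ((continuousOn_const.mul continuousOn_id).mul
      Real.continuous_sqrt.continuousOn).mul contOn_dP

/-- arcs -/
def AO (t s : ℝ) : Set (EuclideanSpace ℝ (Fin 3)) := φ t s '' Set.Icc 0 1
def AP (t s : ℝ) : Set (EuclideanSpace ℝ (Fin 3)) := ψ t s '' Set.Icc 0 1

lemma AO_pc (t s : ℝ) : IsPreconnected (AO t s) :=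
  isPreconnected_Icc.image _ (contOn_φ t s)
lemma AP_pc (t s : ℝ) : IsPreconnected (AP t s) :=
  isPreconnected_Icc.image _ (contOn_ψ t s)

lemma φ_zero (t s : ℝ) : φ t s 0 = pt 0 0 t := by
  simp [φ, nO]

lemma ψ_zero (t s : ℝ) : ψ t s 0 = pt 0 s 0 := by
  simp [ψ, dP]

lemma ψ_one (t s : ℝ) : ψ t s 1 = pt (-(t * (Real.sqrt 2)⁻¹)) 0 (t * (Real.sqrt 2)⁻¹) := by
  simp [ψ, dP]
  norm_num

def SetS (v : EuclideanSpace ℝ (Fin 3)) : Prop :=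
  ‖v‖ = 1 ∧ (v 0)^3 - v 0 * (v 2)^2 + (v 1)^2 * v 2 = 0

lemma neg_apply3 (v : EuclideanSpace ℝ (Fin 3)) (i : Fin 3) : (-v) i = -(v i) := rfl

lemma SetS.neg {v : EuclideanSpace ℝ (Fin 3)} (h : SetS v) : SetS (-v) := by
  obtain ⟨h1, h2⟩ := h
  refine ⟨by rwa [norm_neg], ?_⟩
  simp only [neg_apply3]
  linear_combination -h2

lemma neg_φ (t s u : ℝ) : -(φ t s u) = φ (-t) (-s) u := by
  simp only [φ, neg_pt]
  rw [show -(t*u*nO u) = -t*u*nO u by ring, show -(s*Real.sqrt (u-u^3)*nO u) =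
    -s*Real.sqrt (u-u^3)*nO u by ring, show -(t*nO u) = -t*nO u by ring]

lemma neg_ψ (t s u : ℝ) : -(ψ t s u) = ψ (-t) (-s) u := by
  simp only [ψ, neg_pt]
  rw [show -(-(t*Real.sqrt u*dP u)) = -(-t*Real.sqrt u*dP u) by ring,
    show -(s*Real.sqrt (1-u^2)*dP u) = -s*Real.sqrt (1-u^2)*dP u by ring,
    show -(t*u*Real.sqrt u*dP u) = -t*u*Real.sqrt u*dP u by ring]

lemma φ_mem_S {t s u : ℝ} (ht : t = 1 ∨ t = -1) (hs : s = 1 ∨ s = -1)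
    (h0 : 0 ≤ u) (h1 : u ≤ 1) : SetS (φ t s u) := by
  have ht2 : t^2 = 1 := by rcases ht with h | h <;> rw [h] <;> norm_num
  have hs2 : s^2 = 1 := by rcases hs with h | h <;> rw [h] <;> norm_num
  exact φ_mem ht2 hs2 h0 h1

lemma ψ_mem_S {t s u : ℝ} (ht : t = 1 ∨ t = -1) (hs : s = 1 ∨ s = -1)
    (h0 : 0 ≤ u) (h1 : u ≤ 1) : SetS (ψ t s u) := by
  have ht2 : t^2 = 1 := by rcases ht with h | h <;> rw [h] <;> norm_num
  have hs2 : s^2 = 1 := by rcases hs with h | h <;> rw [h] <;> norm_num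
  exact ψ_mem ht2 hs2 h0 h1

lemma C1_eq : {v : EuclideanSpace ℝ (Fin 3) | SetS v ∧ 0 ≤ v 0 ∧ 0 < v 2}
    = AO 1 1 ∪ AO 1 (-1) := by
  ext v
  constructor
  · rintro ⟨⟨h1, h2⟩, hx, hz⟩
    obtain ⟨s, u, hs, h0, hu1, heq⟩ := φ_surj h1 h2 hx hz
    rcases hs with rfl | rfl
    · exact Or.inl ⟨u, ⟨h0, hu1⟩, heq⟩
    · exact Or.inr ⟨u, ⟨h0, hu1⟩, heq⟩
  · rintro (⟨u, ⟨h0, h1⟩, rfl⟩ | ⟨u, ⟨h0, h1⟩, rfl⟩) <;>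
    exact ⟨φ_mem_S (Or.inl rfl) (by norm_num) h0 h1,
      by show (0:ℝ) ≤ 1 * u * nO u; rw [one_mul]; exact mul_nonneg h0 (nO_pos h0 h1).le,
      by show (0:ℝ) < 1 * nO u; rw [one_mul]; exact nO_pos h0 h1⟩

lemma C2_eq : {v : EuclideanSpace ℝ (Fin 3) | SetS v ∧ v 0 ≤ 0 ∧ v 2 < 0}
    = AO (-1) 1 ∪ AO (-1) (-1) := by
  ext v
  constructor
  · rintro ⟨hS, hx, hz⟩
    obtain ⟨h1, h2⟩ := hS.neg
    obtain ⟨s, u, hs, h0, hu1, heq⟩ := φ_surj h1 h2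
      (by simp only [neg_apply3]; linarith) (by simp only [neg_apply3]; linarith)
    have hv : v = φ (-1) (-s) u := by
      rw [← neg_φ, heq, neg_neg]
    rcases hs with rfl | rfl
    · exact Or.inr ⟨u, ⟨h0, hu1⟩, hv.symm⟩
    · exact Or.inl ⟨u, ⟨h0, hu1⟩, by rw [hv]; norm_num⟩
  · rintro (⟨u, ⟨h0, h1⟩, rfl⟩ | ⟨u, ⟨h0, h1⟩, rfl⟩) <;>
    exact ⟨φ_mem_S (Or.inr rfl) (by norm_num) h0 h1,
      by show (-1:ℝ) * u * nO u ≤ 0; nlinarith [nO_pos h0 h1, mul_nonneg h0 (nO_pos h0 h1).le],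
      by show (-1:ℝ) * nO u < 0; nlinarith [nO_pos h0 h1]⟩

lemma ψ_region_pos (s : ℝ) {u : ℝ} (h0 : 0 ≤ u) (h1 : u ≤ 1) :
    ¬(0 ≤ ψ 1 s u 0 ∧ 0 < ψ 1 s u 2) ∧ ¬(ψ 1 s u 0 ≤ 0 ∧ ψ 1 s u 2 < 0) := by
  have hd := dP_pos h0 h1
  have hsu := Real.sqrt_nonneg u
  constructor
  · rintro ⟨ha, hb⟩
    have ha' : (0:ℝ) ≤ -(1 * Real.sqrt u * dP u) := ha
    have hb' : (0:ℝ) < 1 * u * Real.sqrt u * dP u := hb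
    nlinarith [mul_nonneg h0 (by linarith : (0:ℝ) ≤ -(Real.sqrt u * dP u))]
  · rintro ⟨_, hb⟩
    have hb' : (1:ℝ) * u * Real.sqrt u * dP u < 0 := hb
    nlinarith [mul_nonneg (mul_nonneg h0 hsu) hd.le]

lemma ψ_region_neg (s : ℝ) {u : ℝ} (h0 : 0 ≤ u) (h1 : u ≤ 1) :
    ¬(0 ≤ ψ (-1) s u 0 ∧ 0 < ψ (-1) s u 2) ∧ ¬(ψ (-1) s u 0 ≤ 0 ∧ ψ (-1) s u 2 < 0) := by
  have hd := dP_pos h0 h1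
  have hsu := Real.sqrt_nonneg u
  constructor
  · rintro ⟨_, hb⟩
    have hb' : (0:ℝ) < -1 * u * Real.sqrt u * dP u := hb
    nlinarith [mul_nonneg (mul_nonneg h0 hsu) hd.le]
  · rintro ⟨ha, hb⟩
    have ha' : -(-1 * Real.sqrt u * dP u) ≤ 0 := ha
    have hb' : -1 * u * Real.sqrt u * dP u < 0 := hb
    have hu : 0 < u := by
      rcases eq_or_lt_of_le h0 with h | h
      · rw [← h] at hb'; norm_num at hb'
      · exact h
    have hsp : 0 < Real.sqrt u := Real.sqrt_pos.mpr hu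
    nlinarith [mul_pos hsp hd]

lemma C3_eq : {v : EuclideanSpace ℝ (Fin 3) | SetS v ∧
      ¬(0 ≤ v 0 ∧ 0 < v 2) ∧ ¬(v 0 ≤ 0 ∧ v 2 < 0)}
    = (AP 1 1 ∪ AP 1 (-1)) ∪ (AP (-1) 1 ∪ AP (-1) (-1)) := by
  ext v
  constructor
  · rintro ⟨⟨h1, h2⟩, hn1, hn2⟩
    rcases lt_trichotomy (v 2) 0 with hz | hz | hz
    · -- z < 0, x > 0, use -v
      push_neg at hn2
      have hx : 0 < v 0 := by
        rcases lt_or_ge 0 (v 0) with h | h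
        · exact h
        · exact absurd (hn2 h) (not_le.mpr hz)
      obtain ⟨h1', h2'⟩ := SetS.neg ⟨h1, h2⟩
      obtain ⟨s, u, hs, h0, hu1, heq⟩ := ψ_surj h1' h2'
        (by simp only [neg_apply3]; linarith) (by simp only [neg_apply3]; linarith)
      have hv : v = ψ (-1) (-s) u := by rw [← neg_ψ, heq, neg_neg]
      rcases hs with rfl | rfl
      · exact Or.inr (Or.inr ⟨u, ⟨h0, hu1⟩, hv.symm⟩)
      · exact Or.inr (Or.inl ⟨u, ⟨h0, hu1⟩, by rw [hv]; norm_num⟩)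
    · -- z = 0
      have hx0 : v 0 = 0 := by
        have h3 : (v 0)^3 = 0 := by rw [hz] at h2; linarith [h2]
        exact pow_eq_zero_iff (by norm_num) |>.mp h3
      have hy2 : (v 1)^2 = 1 := by
        have := norm_sq v h1; rw [hx0, hz] at this; linarith
      have hy : v 1 = 1 ∨ v 1 = -1 := by
        have : (v 1 - 1) * (v 1 + 1) = 0 := by linear_combination hy2
        rcases mul_eq_zero.mp this with h | h
        · exact Or.inl (by linarith)
        · exact Or.inr (by linarith)
      have hv : v = pt 0 (v 1) 0 := by
        conv_lhs => rw [pt_eta v]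
        rw [hx0, hz]
      rcases hy with h | h
      · exact Or.inl (Or.inl ⟨0, ⟨le_refl _, zero_le_one⟩, by rw [ψ_zero, ← h, ← hv]⟩)
      · exact Or.inl (Or.inr ⟨0, ⟨le_refl _, zero_le_one⟩, by rw [ψ_zero]; rw [h] at hv; exact hv.symm⟩)
    · -- z > 0, x < 0
      push_neg at hn1
      have hx : v 0 < 0 := by
        rcases lt_or_ge (v 0) 0 with h | h
        · exact h
        · exact absurd hz (not_lt.mpr (hn1 h))
      obtain ⟨s, u, hs, h0, hu1, heq⟩ := ψ_surj h1 h2 hx hz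
      rcases hs with rfl | rfl
      · exact Or.inl (Or.inl ⟨u, ⟨h0, hu1⟩, heq⟩)
      · exact Or.inl (Or.inr ⟨u, ⟨h0, hu1⟩, heq⟩)
  · rintro ((⟨u, ⟨h0, h1⟩, rfl⟩ | ⟨u, ⟨h0, h1⟩, rfl⟩) |
            (⟨u, ⟨h0, h1⟩, rfl⟩ | ⟨u, ⟨h0, h1⟩, rfl⟩))
    · exact ⟨ψ_mem_S (Or.inl rfl) (Or.inl rfl) h0 h1,
        (ψ_region_pos 1 h0 h1).1, (ψ_region_pos 1 h0 h1).2⟩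
    · exact ⟨ψ_mem_S (Or.inl rfl) (Or.inr rfl) h0 h1,
        (ψ_region_pos (-1) h0 h1).1, (ψ_region_pos (-1) h0 h1).2⟩
    · exact ⟨ψ_mem_S (Or.inr rfl) (Or.inl rfl) h0 h1,
        (ψ_region_neg 1 h0 h1).1, (ψ_region_neg 1 h0 h1).2⟩
    · exact ⟨ψ_mem_S (Or.inr rfl) (Or.inr rfl) h0 h1,
        (ψ_region_neg (-1) h0 h1).1, (ψ_region_neg (-1) h0 h1).2⟩

lemma pc1 : IsPreconnected (AO 1 1 ∪ AO 1 (-1)) := by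
  refine IsPreconnected.union (pt 0 0 1) ?_ ?_ (AO_pc 1 1) (AO_pc 1 (-1))
  · exact ⟨0, ⟨le_rfl, zero_le_one⟩, φ_zero 1 1⟩
  · exact ⟨0, ⟨le_rfl, zero_le_one⟩, φ_zero 1 (-1)⟩

lemma pc2 : IsPreconnected (AO (-1) 1 ∪ AO (-1) (-1)) := by
  refine IsPreconnected.union (pt 0 0 (-1)) ?_ ?_ (AO_pc _ 1) (AO_pc _ (-1))
  · exact ⟨0, ⟨le_rfl, zero_le_one⟩, φ_zero (-1) 1⟩
  · exact ⟨0, ⟨le_rfl, zero_le_one⟩, φ_zero (-1) (-1)⟩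

lemma pc3 : IsPreconnected ((AP 1 1 ∪ AP 1 (-1)) ∪ (AP (-1) 1 ∪ AP (-1) (-1))) := by
  have i1 : IsPreconnected (AP 1 1 ∪ AP 1 (-1)) := by
    refine IsPreconnected.union (ψ 1 1 1) ?_ ?_ (AP_pc _ _) (AP_pc _ _)
    · exact ⟨1, ⟨zero_le_one, le_rfl⟩, rfl⟩
    · exact ⟨1, ⟨zero_le_one, le_rfl⟩, (ψ_one 1 (-1)).trans (ψ_one 1 1).symm⟩
  have i2 : IsPreconnected (AP (-1) 1 ∪ AP (-1) (-1)) := by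
    refine IsPreconnected.union (ψ (-1) 1 1) ?_ ?_ (AP_pc _ _) (AP_pc _ _)
    · exact ⟨1, ⟨zero_le_one, le_rfl⟩, rfl⟩
    · exact ⟨1, ⟨zero_le_one, le_rfl⟩, (ψ_one (-1) (-1)).trans (ψ_one (-1) 1).symm⟩
  refine IsPreconnected.union (pt 0 1 0) ?_ ?_ i1 i2
  · exact Or.inl ⟨0, ⟨le_rfl, zero_le_one⟩, ψ_zero 1 1⟩
  · exact Or.inl ⟨0, ⟨le_rfl, zero_le_one⟩, ψ_zero (-1) 1⟩

lemma pseudo_xz {x y z : ℝ} (hf : x^3 - x*z^2 + y^2*z = 0) (hx : x < 0) (hz : 0 < z) :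
    z + x ≤ 0 := by
  by_contra hc
  push_neg at hc
  nlinarith [mul_nonneg (sq_nonneg y) hz.le,
    mul_pos (mul_pos (neg_pos.mpr hx) (show (0:ℝ) < z - x by linarith)) hc]

abbrev Tsp : Type := {v : EuclideanSpace ℝ (Fin 3) //
  ‖v‖ = 1 ∧ (v 0) ^ 3 - v 0 * (v 2) ^ 2 + (v 1) ^ 2 * v 2 = 0}

def K1 : Set Tsp := {p | 0 ≤ p.1 0 ∧ 0 < p.1 2}
def K2 : Set Tsp := {p | p.1 0 ≤ 0 ∧ p.1 2 < 0}
def K3 : Set Tsp := {p | ¬(0 ≤ p.1 0 ∧ 0 < p.1 2) ∧ ¬(p.1 0 ≤ 0 ∧ p.1 2 < 0)}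

lemma val_K1 : Subtype.val '' K1 = {v : EuclideanSpace ℝ (Fin 3) | SetS v ∧ 0 ≤ v 0 ∧ 0 < v 2} := by
  ext v
  constructor
  · rintro ⟨⟨w, hw⟩, hK, rfl⟩; exact ⟨hw, hK⟩
  · rintro ⟨hS, hK⟩; exact ⟨⟨v, hS⟩, hK, rfl⟩

lemma val_K2 : Subtype.val '' K2 = {v : EuclideanSpace ℝ (Fin 3) | SetS v ∧ v 0 ≤ 0 ∧ v 2 < 0} := by
  ext v
  constructor
  · rintro ⟨⟨w, hw⟩, hK, rfl⟩; exact ⟨hw, hK⟩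
  · rintro ⟨hS, hK⟩; exact ⟨⟨v, hS⟩, hK, rfl⟩

lemma val_K3 : Subtype.val '' K3 = {v : EuclideanSpace ℝ (Fin 3) | SetS v ∧
    ¬(0 ≤ v 0 ∧ 0 < v 2) ∧ ¬(v 0 ≤ 0 ∧ v 2 < 0)} := by
  ext v
  constructor
  · rintro ⟨⟨w, hw⟩, hK, rfl⟩; exact ⟨hw, hK⟩
  · rintro ⟨hS, hK⟩; exact ⟨⟨v, hS⟩, hK, rfl⟩

lemma pcK1 : IsPreconnected K1 := by
  refine Topology.IsInducing.subtypeVal.isPreconnected_image.mp ?_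
  convert pc1 using 1
  exact val_K1.trans C1_eq
lemma pcK2 : IsPreconnected K2 := by
  refine Topology.IsInducing.subtypeVal.isPreconnected_image.mp ?_
  convert pc2 using 1
  exact val_K2.trans C2_eq
lemma pcK3 : IsPreconnected K3 := by
  refine Topology.IsInducing.subtypeVal.isPreconnected_image.mp ?_
  convert pc3 using 1
  exact val_K3.trans C3_eq

lemma oK1 : IsOpen K1 := by
  have ho : IsOpen {v : EuclideanSpace ℝ (Fin 3) | 0 < v 2 ∧ 0 < v 0 + v 2} :=
    (isOpen_lt continuous_const (coord_continuous 2)).inter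
      (isOpen_lt continuous_const ((coord_continuous 0).add (coord_continuous 2)))
  have he : K1 = Subtype.val ⁻¹' {v : EuclideanSpace ℝ (Fin 3) | 0 < v 2 ∧ 0 < v 0 + v 2} := by
    ext ⟨v, hv1, hv2⟩
    constructor
    · rintro ⟨hx, hz⟩; exact ⟨hz, by linarith⟩
    · rintro ⟨hz, hxz⟩
      refine ⟨?_, hz⟩
      by_contra hc
      push_neg at hc
      have := pseudo_xz hv2 hc hz
      linarith
  rw [he]
  exact ho.preimage continuous_subtype_val

lemma oK2 : IsOpen K2 := by
  have ho : IsOpen {v : EuclideanSpace ℝ (Fin 3) | v 2 < 0 ∧ v 0 + v 2 < 0} :=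
    (isOpen_lt (coord_continuous 2) continuous_const).inter
      (isOpen_lt ((coord_continuous 0).add (coord_continuous 2)) continuous_const)
  have he : K2 = Subtype.val ⁻¹' {v : EuclideanSpace ℝ (Fin 3) | v 2 < 0 ∧ v 0 + v 2 < 0} := by
    ext ⟨v, hv1, hv2⟩
    constructor
    · rintro ⟨hx, hz⟩; exact ⟨hz, by linarith⟩
    · rintro ⟨hz, hxz⟩
      refine ⟨?_, hz⟩
      by_contra hc
      push_neg at hc
      have hf' : (-(v 0))^3 - (-(v 0))*(-(v 2))^2 + (v 1)^2*(-(v 2)) = 0 := by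
        linear_combination -hv2
      have := pseudo_xz hf' (by linarith) (by linarith)
      linarith
  rw [he]
  exact ho.preimage continuous_subtype_val

lemma oK3 : IsOpen K3 := by
  have ho : IsOpen {v : EuclideanSpace ℝ (Fin 3) | v 0 * v 2 < 0 ∨ 1/2 < (v 1)^2} :=
    (isOpen_lt ((coord_continuous 0).mul (coord_continuous 2)) continuous_const).union
      (isOpen_lt continuous_const ((coord_continuous 1).pow 2))
  have he : K3 = Subtype.val ⁻¹' {v : EuclideanSpace ℝ (Fin 3) | v 0 * v 2 < 0 ∨ 1/2 < (v 1)^2} := by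
    ext ⟨v, hv1, hv2⟩
    have hns := norm_sq v hv1
    constructor
    · rintro ⟨hn1, hn2⟩
      rcases lt_trichotomy (v 2) 0 with hz | hz | hz
      · push_neg at hn2
        have hx : 0 < v 0 := by
          rcases lt_or_ge 0 (v 0) with h | h
          · exact h
          · exact absurd (hn2 h) (not_le.mpr hz)
        exact Or.inl (mul_neg_of_pos_of_neg hx hz)
      · have hx0 : v 0 = 0 := by
          have h3 : (v 0)^3 = 0 := by rw [hz] at hv2; linarith [hv2]
          exact pow_eq_zero_iff (by norm_num) |>.mp h3
        have : (v 1)^2 = 1 := by rw [hx0, hz] at hns; linarith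
        exact Or.inr (by rw [this]; norm_num)
      · push_neg at hn1
        have hx : v 0 < 0 := by
          rcases lt_or_ge (v 0) 0 with h | h
          · exact h
          · exact absurd hz (not_lt.mpr (hn1 h))
        exact Or.inl (mul_neg_of_neg_of_pos hx hz)
    · rintro (h | h)
      · constructor
        · rintro ⟨hx, hz⟩; nlinarith
        · rintro ⟨hx, hz⟩; nlinarith
      · constructor
        · rintro ⟨hx, hz⟩
          have := y_small hns hv2 hx hz
          linarith
        · rintro ⟨hx, hz⟩
          have hf' : (-(v 0))^3 - (-(v 0))*(-(v 2))^2 + (-(v 1))^2*(-(v 2)) = 0 := by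
            linear_combination -hv2
          have hns' : (-(v 0))^2 + (-(v 1))^2 + (-(v 2))^2 = 1 := by linarith [hns]
          have := y_small hns' hf' (by linarith) (by linarith)
          nlinarith
  rw [he]
  exact ho.preimage continuous_subtype_val

lemma compl_K1 : K1ᶜ = K2 ∪ K3 := by
  ext p
  constructor
  · intro h
    by_cases h2 : p.1 0 ≤ 0 ∧ p.1 2 < 0
    · exact Or.inl h2
    · exact Or.inr ⟨h, h2⟩
  · rintro (h | h) hK1
    · obtain ⟨_, hz⟩ := hK1; obtain ⟨_, hz'⟩ := h; linarith
    · exact h.1 hK1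

lemma compl_K2 : K2ᶜ = K1 ∪ K3 := by
  ext p
  constructor
  · intro h
    by_cases h1 : 0 ≤ p.1 0 ∧ 0 < p.1 2
    · exact Or.inl h1
    · exact Or.inr ⟨h1, h⟩
  · rintro (h | h) hK2
    · obtain ⟨_, hz⟩ := hK2; obtain ⟨_, hz'⟩ := h; linarith
    · exact h.2 hK2

lemma compl_K3 : K3ᶜ = K1 ∪ K2 := by
  ext p
  constructor
  · intro h
    by_cases h1 : 0 ≤ p.1 0 ∧ 0 < p.1 2
    · exact Or.inl h1
    · by_cases h2 : p.1 0 ≤ 0 ∧ p.1 2 < 0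
      · exact Or.inr h2
      · exact absurd ⟨h1, h2⟩ h
  · rintro (h | h) hK3
    · exact hK3.1 h
    · exact hK3.2 h

lemma clopenK1 : IsClopen K1 :=
  ⟨isOpen_compl_iff.mp (by rw [compl_K1]; exact oK2.union oK3), oK1⟩
lemma clopenK2 : IsClopen K2 :=
  ⟨isOpen_compl_iff.mp (by rw [compl_K2]; exact oK1.union oK3), oK2⟩
lemma clopenK3 : IsClopen K3 :=
  ⟨isOpen_compl_iff.mp (by rw [compl_K3]; exact oK1.union oK2), oK3⟩

lemma conn_eq {K : Set Tsp} (hK : IsClopen K) (hpc : IsPreconnected K) {p : Tsp}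
    (hp : p ∈ K) : connectedComponent p = K :=
  subset_antisymm (hK.connectedComponent_subset hp) (hpc.subset_connectedComponent hp)

def P1 : Tsp := ⟨pt 0 0 1, norm_pt 0 0 1 (by norm_num), by simp⟩
def P2 : Tsp := ⟨pt 0 0 (-1), norm_pt 0 0 (-1) (by norm_num), by simp⟩
def P3 : Tsp := ⟨pt 0 1 0, norm_pt 0 1 0 (by norm_num), by simp⟩

lemma P1_mem : P1 ∈ K1 := ⟨le_rfl, show (0:ℝ) < 1 by norm_num⟩
lemma P2_mem : P2 ∈ K2 := ⟨le_rfl, show (-1:ℝ) < 0 by norm_num⟩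
lemma P3_mem : P3 ∈ K3 := by
  constructor
  · rintro ⟨-, h⟩; exact absurd (show (0:ℝ) < 0 from h) (lt_irrefl 0)
  · rintro ⟨-, h⟩; exact absurd (show (0:ℝ) < 0 from h) (lt_irrefl 0)

lemma cc_P1 : connectedComponent P1 = K1 := conn_eq clopenK1 pcK1 P1_mem
lemma cc_P2 : connectedComponent P2 = K2 := conn_eq clopenK2 pcK2 P2_mem
lemma cc_P3 : connectedComponent P3 = K3 := conn_eq clopenK3 pcK3 P3_mem

lemma card_cc : Nat.card (ConnectedComponents Tsp) = 3 := by
  classical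
  have d12 : ConnectedComponents.mk P1 ≠ ConnectedComponents.mk P2 := by
    intro h
    have h' := ConnectedComponents.coe_eq_coe.mp h
    rw [cc_P1, cc_P2] at h'
    have h2 := h' ▸ P1_mem
    have : (1:ℝ) < 0 := h2.2
    norm_num at this
  have d13 : ConnectedComponents.mk P1 ≠ ConnectedComponents.mk P3 := by
    intro h
    have h' := ConnectedComponents.coe_eq_coe.mp h
    rw [cc_P1, cc_P3] at h'
    have h2 := h' ▸ P1_mem
    exact h2.1 ⟨le_rfl, show (0:ℝ) < 1 by norm_num⟩
  have d23 : ConnectedComponents.mk P2 ≠ ConnectedComponents.mk P3 := by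
    intro h
    have h' := ConnectedComponents.coe_eq_coe.mp h
    rw [cc_P2, cc_P3] at h'
    have h2 := h' ▸ P2_mem
    exact h2.2 ⟨le_rfl, show (-1:ℝ) < 0 by norm_num⟩
  have hcover : ∀ p : Tsp, p ∈ K1 ∨ p ∈ K2 ∨ p ∈ K3 := by
    intro p
    by_cases h1 : 0 ≤ p.1 0 ∧ 0 < p.1 2
    · exact Or.inl h1
    by_cases h2 : p.1 0 ≤ 0 ∧ p.1 2 < 0
    · exact Or.inr (Or.inl h2)
    · exact Or.inr (Or.inr ⟨h1, h2⟩)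
  let F : Fin 3 → ConnectedComponents Tsp :=
    ![ConnectedComponents.mk P1, ConnectedComponents.mk P2, ConnectedComponents.mk P3]
  have hinj : Function.Injective F := by
    intro i j h
    exact match i, j, h with
    | 0, 0, _ => rfl
    | 0, 1, h => absurd h d12
    | 0, 2, h => absurd h d13
    | 1, 0, h => absurd h.symm d12
    | 1, 1, _ => rfl
    | 1, 2, h => absurd h d23
    | 2, 0, h => absurd h.symm d13
    | 2, 1, h => absurd h.symm d23
    | 2, 2, _ => rfl
  have hsurj : Function.Surjective F := by
    intro c
    obtain ⟨p, rfl⟩ := ConnectedComponents.surjective_coe c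
    rcases hcover p with hp | hp | hp
    · exact ⟨0, ConnectedComponents.coe_eq_coe.mpr
        (cc_P1.trans (conn_eq clopenK1 pcK1 hp).symm)⟩
    · exact ⟨1, ConnectedComponents.coe_eq_coe.mpr
        (cc_P2.trans (conn_eq clopenK2 pcK2 hp).symm)⟩
    · exact ⟨2, ConnectedComponents.coe_eq_coe.mpr
        (cc_P3.trans (conn_eq clopenK3 pcK3 hp).symm)⟩
  calc Nat.card (ConnectedComponents Tsp)
      = Nat.card (Fin 3) := Nat.card_congr (Equiv.ofBijective F ⟨hinj, hsurj⟩).symm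
    _ = 3 := by simp

/-- the cubic `f = x³ − xz² + y²z` (representative of `P₈²`) is
nondegenerate — its complex gradient does not vanish on its complex zero set away from
the origin — and its real zero set on the unit sphere in `ℝ³` has exactly three
connected components. -/
theorem stmt13 :
    (∀ x y z : ℂ, (x, y, z) ≠ ((0 : ℂ), (0 : ℂ), (0 : ℂ)) →
      x ^ 3 - x * z ^ 2 + y ^ 2 * z = 0 →
      (3 * x ^ 2 - z ^ 2, 2 * y * z, -2 * x * z + y ^ 2) ≠ ((0 : ℂ), (0 : ℂ), (0 : ℂ))) ∧
    Nat.card (ConnectedComponents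
      {v : EuclideanSpace ℝ (Fin 3) //
        ‖v‖ = 1 ∧ (v 0) ^ 3 - v 0 * (v 2) ^ 2 + (v 1) ^ 2 * v 2 = 0}) = 3 := by
  constructor
  · rintro x y z hne hf heq
    rw [Prod.mk.injEq, Prod.mk.injEq] at heq
    obtain ⟨h1, h2, h3⟩ := heq
    apply hne
    rw [Prod.mk.injEq, Prod.mk.injEq]
    by_cases hz : z = 0
    · subst hz
      have hx : x = 0 := by
        have hx2 : x^2 = 0 := by linear_combination h1/3
        exact pow_eq_zero_iff two_ne_zero |>.mp hx2
      have hy : y = 0 := by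
        have hy2 : y^2 = 0 := by linear_combination h3 + 2*0*x
        exact pow_eq_zero_iff two_ne_zero |>.mp hy2
      exact ⟨hx, hy, rfl⟩
    · exfalso
      have hy : y = 0 := by
        rcases mul_eq_zero.mp (show (2*y)*z = (0:ℂ) by linear_combination h2) with h | h
        · linear_combination h/2
        · exact absurd h hz
      have hx : x = 0 := by
        have h4 : (-2*x)*z = (0:ℂ) := by linear_combination h3 - y*hy
        rcases mul_eq_zero.mp h4 with h | h
        · linear_combination -h/2
        · exact absurd h hz
      have hz2 : z^2 = (0:ℂ) := by linear_combination -h1 + 3*x*hx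
      exact hz (pow_eq_zero_iff two_ne_zero |>.mp hz2)
  · exact card_cc
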